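/- The size of a minimum vertex cover of the violation graph VG_f equals ε_f · |D|, where ε_f · |D| is the minimum number of points at which f must be modified to make it (α,β)-Lipschitz. -/
import Mathlib


/-- pseudo-distance on `(Fin n → Fin k)`:
`β‖x - hcd(x,y)‖₁ - α‖y - hcd(x,y)‖₁` with `hcd` the coordinatewise min. -/
noncomputable def fd {n k : ℕ} (α β : ℝ) (x y : Fin n → Fin k) : ℝ :=
  β * ∑ i, (((x i : ℕ) : ℝ) - ((min (x i) (y i) : Fin k) : ℕ)) -
  α * ∑ i, (((y i : ℕ) : ℝ) - ((min (x i) (y i) : Fin k) : ℕ))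

/-- violation weight of a pair. -/
noncomputable def vw {n k : ℕ} (α β : ℝ) (f : (Fin n → Fin k) → ℝ)
    (x y : Fin n → Fin k) : ℝ :=
  max (f x - f y - fd α β x y) (f y - f x - fd α β y x)

/-- the `(α,β)`-Lipschitz (bounded-derivative) property. -/
def IsABLip {n k : ℕ} (α β : ℝ) (g : (Fin n → Fin k) → ℝ) : Prop :=
  ∀ x y : Fin n → Fin k,
    (∃ i, (y i : ℕ) = (x i : ℕ) + 1 ∧ ∀ j, j ≠ i → y j = x j) →
      α ≤ g y - g x ∧ g y - g x ≤ β

lemma fd_self {n k : ℕ} (α β : ℝ) (x : Fin n → Fin k) : fd α β x x = 0 := by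
  simp [fd]


lemma sum_sub_eq_single {n : ℕ} (F G : Fin n → ℝ) (i : Fin n)
    (h : ∀ j, j ≠ i → F j = G j) : ∑ j, F j - ∑ j, G j = F i - G i := by
  rw [← Finset.sum_sub_distrib]
  rw [Finset.sum_eq_single i (fun b _ hb => by rw [h b hb]; ring) (by simp)]


lemma fd_step {n k : ℕ} (α β : ℝ) {x y : Fin n → Fin k} {i : Fin n}
    (h1 : (y i : ℕ) = (x i : ℕ) + 1) (h2 : ∀ j, j ≠ i → y j = x j)
    (z : Fin n → Fin k) :
    fd α β y z = fd α β x z + β ∨ fd α β y z = fd α β x z + α := by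
  have e1 : ∑ j, (((y j : ℕ) : ℝ) - ((min (y j) (z j) : Fin k) : ℕ)) -
      ∑ j, (((x j : ℕ) : ℝ) - ((min (x j) (z j) : Fin k) : ℕ)) =
      (((y i : ℕ) : ℝ) - ((min (y i) (z i) : Fin k) : ℕ)) -
      (((x i : ℕ) : ℝ) - ((min (x i) (z i) : Fin k) : ℕ)) :=
    sum_sub_eq_single _ _ i (fun j hj => by rw [h2 j hj])
  have e2 : ∑ j, (((z j : ℕ) : ℝ) - ((min (y j) (z j) : Fin k) : ℕ)) -
      ∑ j, (((z j : ℕ) : ℝ) - ((min (x j) (z j) : Fin k) : ℕ)) =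
      (((z i : ℕ) : ℝ) - ((min (y i) (z i) : Fin k) : ℕ)) -
      (((z i : ℕ) : ℝ) - ((min (x i) (z i) : Fin k) : ℕ)) :=
    sum_sub_eq_single _ _ i (fun j hj => by rw [h2 j hj])
  have hmy : ((min (y i) (z i) : Fin k) : ℕ) = min ((y i : ℕ)) ((z i : ℕ)) := rfl
  have hmx : ((min (x i) (z i) : Fin k) : ℕ) = min ((x i : ℕ)) ((z i : ℕ)) := rfl
  rcases le_or_gt ((z i : ℕ)) ((x i : ℕ)) with hc | hc
  · left
    have hy' : min ((y i : ℕ)) ((z i : ℕ)) = (z i : ℕ) := by omega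
    have hx' : min ((x i : ℕ)) ((z i : ℕ)) = (z i : ℕ) := by omega
    rw [hy'] at hmy; rw [hx'] at hmx
    unfold fd
    rw [hmy, hmx] at e1 e2
    have h1' : ((y i : ℕ) : ℝ) = ((x i : ℕ) : ℝ) + 1 := by rw [h1]; push_cast; ring
    linear_combination β * e1 - α * e2 + β * h1'
  · right
    have hy' : min ((y i : ℕ)) ((z i : ℕ)) = (y i : ℕ) := by omega
    have hx' : min ((x i : ℕ)) ((z i : ℕ)) = (x i : ℕ) := by omega
    rw [hy'] at hmy; rw [hx'] at hmx
    unfold fd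
    rw [hmy, hmx] at e1 e2
    have h1' : ((y i : ℕ) : ℝ) = ((x i : ℕ) : ℝ) + 1 := by rw [h1]; push_cast; ring
    linear_combination β * e1 - α * e2 + α * h1'


lemma lip_path {n k : ℕ} {α β : ℝ} {g : (Fin n → Fin k) → ℝ} (hg : IsABLip α β g)
    (w : Fin n → Fin k) :
    ∀ N : ℕ, ∀ z : Fin n → Fin k, (∀ i, (z i : ℕ) ≤ (w i : ℕ)) →
      (∑ i, ((w i : ℕ) - (z i : ℕ))) = N →
      α * N ≤ g w - g z ∧ g w - g z ≤ β * N := by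
  intro N
  induction N with
  | zero =>
    intro z hle hsum
    have hz : z = w := by
      funext i
      have h1 := (Finset.sum_eq_zero_iff.mp hsum) i (Finset.mem_univ i)
      have h2 := hle i
      exact Fin.ext (by omega)
    subst hz
    simp
  | succ N ih =>
    intro z hle hsum
    have hex : ∃ i, (z i : ℕ) < (w i : ℕ) := by
      by_contra hcon
      push_neg at hcon
      have : ∑ i, ((w i : ℕ) - (z i : ℕ)) = 0 :=
        Finset.sum_eq_zero (fun i _ => by have := hcon i; omega)
      omega
    obtain ⟨i, hi⟩ := hex
    have hlt : (z i : ℕ) + 1 < k := lt_of_le_of_lt hi (w i).isLt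
    set z' : Fin n → Fin k := Function.update z i ⟨(z i : ℕ) + 1, hlt⟩ with hz'
    have hz'i : (z' i : ℕ) = (z i : ℕ) + 1 := by simp [hz']
    have hz'j : ∀ j, j ≠ i → z' j = z j := fun j hj => Function.update_of_ne hj _ _
    have hstep := hg z z' ⟨i, hz'i, hz'j⟩
    have hle' : ∀ j, (z' j : ℕ) ≤ (w j : ℕ) := by
      intro j
      rcases eq_or_ne j i with rfl | hj
      · omega
      · rw [hz'j j hj]; exact hle j
    have hsum' : (∑ j, ((w j : ℕ) - (z' j : ℕ))) = N := by
      have e1 := Fintype.sum_eq_add_sum_compl i (fun j => (w j : ℕ) - (z j : ℕ))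
      have e2 := Fintype.sum_eq_add_sum_compl i (fun j => (w j : ℕ) - (z' j : ℕ))
      have e3 : ∑ j ∈ ({i} : Finset (Fin n))ᶜ, ((w j : ℕ) - (z' j : ℕ)) =
          ∑ j ∈ ({i} : Finset (Fin n))ᶜ, ((w j : ℕ) - (z j : ℕ)) :=
        Finset.sum_congr rfl (fun j hj => by
          rw [hz'j j (by simpa using hj)])
      omega
    obtain ⟨ih1, ih2⟩ := ih z' hle' hsum'
    have hc : ((N + 1 : ℕ) : ℝ) = (N : ℝ) + 1 := by push_cast; ring
    constructor
    · have : α * ((N : ℝ) + 1) = α * N + α := by ring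
      rw [hc]; linarith [hstep.1]
    · have : β * ((N : ℝ) + 1) = β * N + β := by ring
      rw [hc]; linarith [hstep.2]


lemma lip_le_fd {n k : ℕ} {α β : ℝ} {g : (Fin n → Fin k) → ℝ} (hg : IsABLip α β g)
    (x y : Fin n → Fin k) : g x - g y ≤ fd α β x y := by
  set m : Fin n → Fin k := fun i => min (x i) (y i) with hm
  have hmx : ∀ i, (m i : ℕ) ≤ (x i : ℕ) := fun i => min_le_left _ _
  have hmy : ∀ i, (m i : ℕ) ≤ (y i : ℕ) := fun i => min_le_right _ _
  obtain ⟨_, hx2⟩ := lip_path hg x (∑ i, ((x i : ℕ) - (m i : ℕ))) m hmx rfl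
  obtain ⟨hy1, _⟩ := lip_path hg y (∑ i, ((y i : ℕ) - (m i : ℕ))) m hmy rfl
  have ex : ((∑ i, ((x i : ℕ) - (m i : ℕ)) : ℕ) : ℝ) =
      ∑ i, (((x i : ℕ) : ℝ) - ((m i : ℕ) : ℝ)) := by
    rw [Nat.cast_sum]
    exact Finset.sum_congr rfl (fun i _ => by rw [Nat.cast_sub (hmx i)])
  have ey : ((∑ i, ((y i : ℕ) - (m i : ℕ)) : ℕ) : ℝ) =
      ∑ i, (((y i : ℕ) : ℝ) - ((m i : ℕ) : ℝ)) := by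
    rw [Nat.cast_sum]
    exact Finset.sum_congr rfl (fun i _ => by rw [Nat.cast_sub (hmy i)])
  rw [ex] at hx2
  rw [ey] at hy1
  unfold fd
  linarith


/-- The minimum vertex cover of the violation graph equals the minimum number
of points at which `f` must be modified to become `(α,β)`-Lipschitz. -/
theorem min_vertex_cover_eq_distance {n k : ℕ} (α β : ℝ) (hαβ : α ≤ β)
    (f : (Fin n → Fin k) → ℝ) :
    sInf {m : ℕ | ∃ U : Finset (Fin n → Fin k),
        (∀ x y, 0 < vw α β f x y → x ∈ U ∨ y ∈ U) ∧ U.card = m} =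
    sInf {m : ℕ | ∃ g : (Fin n → Fin k) → ℝ, IsABLip α β g ∧
        Nat.card {x : Fin n → Fin k // f x ≠ g x} = m} := by
  classical
  set A := {m : ℕ | ∃ U : Finset (Fin n → Fin k),
      (∀ x y, 0 < vw α β f x y → x ∈ U ∨ y ∈ U) ∧ U.card = m} with hA
  set B := {m : ℕ | ∃ g : (Fin n → Fin k) → ℝ, IsABLip α β g ∧
      Nat.card {x : Fin n → Fin k // f x ≠ g x} = m} with hB
  -- baseline Lipschitz function
  set g₀ : (Fin n → Fin k) → ℝ := fun x => α * ∑ i, ((x i : ℕ) : ℝ) with hg₀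
  have hbase : IsABLip α β g₀ := by
    rintro x y ⟨i, h1, h2⟩
    have hd : ∑ j, ((y j : ℕ) : ℝ) - ∑ j, ((x j : ℕ) : ℝ) = 1 := by
      rw [sum_sub_eq_single _ _ i (fun j hj => by rw [h2 j hj])]
      rw [h1]; push_cast; ring
    have hdg : g₀ y - g₀ x = α := by
      simp only [hg₀]
      rw [← mul_sub, hd, mul_one]
    rw [hdg]
    exact ⟨le_refl α, hαβ⟩
  have hAne : A.Nonempty :=
    ⟨(Finset.univ : Finset (Fin n → Fin k)).card, Finset.univ,
      fun x y _ => Or.inl (Finset.mem_univ x), rfl⟩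
  have hBne : B.Nonempty := ⟨_, g₀, hbase, rfl⟩
  apply le_antisymm
  · -- min cover ≤ min distance
    obtain ⟨g, hg, hcard⟩ := Nat.sInf_mem hBne
    set U : Finset (Fin n → Fin k) := Finset.univ.filter (fun x => f x ≠ g x) with hU
    have hcov : ∀ x y, 0 < vw α β f x y → x ∈ U ∨ y ∈ U := by
      intro x y hvw
      by_contra hcon
      push_neg at hcon
      have hfx : f x = g x := by
        have := hcon.1; simp [hU] at this; exact this
      have hfy : f y = g y := by
        have := hcon.2; simp [hU] at this; exact this
      have h1 : f x - f y - fd α β x y ≤ 0 := by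
        have := lip_le_fd hg x y; rw [hfx, hfy]; linarith
      have h2 : f y - f x - fd α β y x ≤ 0 := by
        have := lip_le_fd hg y x; rw [hfx, hfy]; linarith
      have : vw α β f x y ≤ 0 := max_le h1 h2
      linarith
    have hUc : U.card = sInf B := by
      rw [← hcard, Nat.card_eq_fintype_card, Fintype.card_subtype]
    exact Nat.sInf_le ⟨U, hcov, hUc⟩
  · -- min distance ≤ min cover
    obtain ⟨U, hcov, hUcard⟩ := Nat.sInf_mem hAne
    by_cases hT : (Uᶜ : Finset (Fin n → Fin k)).Nonempty
    · set T := (Uᶜ : Finset (Fin n → Fin k)) with hTdef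
      have hno : ∀ x ∈ T, ∀ y ∈ T, f x - f y ≤ fd α β x y := by
        intro x hx y hy
        have hxU : x ∉ U := Finset.mem_compl.mp hx
        have hyU : y ∉ U := Finset.mem_compl.mp hy
        have : ¬ 0 < vw α β f x y := fun h => by
          rcases hcov x y h with h' | h' <;> [exact hxU h'; exact hyU h']
        have h0 : vw α β f x y ≤ 0 := not_lt.mp this
        have := le_max_left (f x - f y - fd α β x y) (f y - f x - fd α β y x)
        have : f x - f y - fd α β x y ≤ 0 := le_trans this h0
        linarith
      set g : (Fin n → Fin k) → ℝ :=
        fun x => T.inf' hT (fun y => f y + fd α β x y) with hgdef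
      have hfix : ∀ x ∈ T, g x = f x := by
        intro x hx
        apply le_antisymm
        · calc g x ≤ f x + fd α β x x := Finset.inf'_le _ hx
            _ = f x := by rw [fd_self]; ring
        · apply Finset.le_inf'
          intro y hy
          have := hno x hx y hy
          linarith
      have hlip : IsABLip α β g := by
        rintro x y ⟨i, h1, h2⟩
        constructor
        · -- α ≤ g y - g x
          have : g x + α ≤ g y := by
            apply Finset.le_inf'
            intro z hz
            have hle := Finset.inf'_le (fun y => f y + fd α β x y) hz
            rcases fd_step α β h1 h2 z with h | h <;> rw [h] <;> linarith
          linarith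
        · -- g y - g x ≤ β
          obtain ⟨z₀, hz₀, hz₀e⟩ := Finset.exists_mem_eq_inf' hT
            (fun y => f y + fd α β x y)
          have hgy : g y ≤ f z₀ + fd α β y z₀ := Finset.inf'_le _ hz₀
          have hgx : g x = f z₀ + fd α β x z₀ := hz₀e
          rcases fd_step α β h1 h2 z₀ with h | h <;> rw [h] at hgy <;> linarith
      have hsub : Finset.univ.filter (fun x => f x ≠ g x) ⊆ U := by
        intro x hx
        simp only [Finset.mem_filter, Finset.mem_univ, true_and] at hx
        by_contra hxU
        exact hx ((hfix x (Finset.mem_compl.mpr hxU)).symm)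
      have hle : Nat.card {x : Fin n → Fin k // f x ≠ g x} ≤ sInf A := by
        rw [Nat.card_eq_fintype_card, Fintype.card_subtype, ← hUcard]
        exact Finset.card_le_card hsub
      exact le_trans (Nat.sInf_le ⟨g, hlip, rfl⟩) hle
    · -- U = univ
      have hUuniv : U = Finset.univ := by
        rw [Finset.not_nonempty_iff_eq_empty] at hT
        rwa [Finset.compl_eq_empty_iff] at hT
      have hle : Nat.card {x : Fin n → Fin k // f x ≠ g₀ x} ≤ sInf A := by
        rw [Nat.card_eq_fintype_card, Fintype.card_subtype, ← hUcard, hUuniv]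
        exact Finset.card_le_card (Finset.subset_univ _)
      exact le_trans (Nat.sInf_le ⟨g₀, hbase, rfl⟩) hle
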